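/- Let γ ≥ 1, 0 < v₊ < 1, a = v₊^γ(1-v₊)/(1-v₊^γ), and H(v) = v(v - 1 + a(v^{-γ} - 1)). Then for all v with v₊ < v < 1, (v - γ) ≤ H(v)/(v - v₊) ≤ (v - (1 - v₊)). In particular H(v) < 0 for v₊ < v < 1. -/

import Mathlib

open Set Real

private lemma rpow_strictConvexOn {p : ℝ} (hp : p < 0) :
    StrictConvexOn ℝ (Set.Ioi 0) (fun x : ℝ => x ^ p) := by
  apply strictConvexOn_of_deriv2_pos' (convex_Ioi 0)
  · intro x hx
    exact (Real.continuousAt_rpow_const x p (Or.inl (ne_of_gt hx))).continuousWithinAt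
  · intro x hx
    have hx0 : (0:ℝ) < x := hx
    have h1 : deriv (fun y : ℝ => y ^ p) =ᶠ[nhds x] fun y => p * y ^ (p - 1) := by
      filter_upwards [eventually_gt_nhds hx0] with y hy
      exact ((Real.hasDerivAt_rpow_const (Or.inl (ne_of_gt hy))).deriv)
    have h2 : deriv^[2] (fun y : ℝ => y ^ p) x = deriv (fun y => p * y ^ (p - 1)) x := by
      show deriv (deriv (fun y : ℝ => y ^ p)) x = _
      exact Filter.EventuallyEq.deriv_eq h1
    have h3 : HasDerivAt (fun y : ℝ => p * y ^ (p - 1)) (p * ((p - 1) * x ^ (p - 1 - 1))) x :=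
      (Real.hasDerivAt_rpow_const (Or.inl (ne_of_gt hx0))).const_mul p
    rw [h2, h3.deriv]
    have hpos := Real.rpow_pos_of_pos hx0 (p - 1 - 1)
    nlinarith [mul_pos_of_neg_of_neg hp (show p - 1 < 0 by linarith), hpos]

set_option maxHeartbeats 1000000 in
theorem stmt3 (γ vp : ℝ) (hγ : 1 ≤ γ) (h0 : 0 < vp) (h1 : vp < 1)
    (a : ℝ) (ha : a = vp ^ γ * (1 - vp) / (1 - vp ^ γ))
    (H : ℝ → ℝ) (hH : ∀ v, H v = v * (v - 1 + a * (v ^ (-γ) - 1))) :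
    ∀ v, vp < v → v < 1 →
      (v - γ ≤ H v / (v - vp) ∧ H v / (v - vp) ≤ v - (1 - vp)) ∧ H v < 0 := by
  have hγ0 : (0:ℝ) < γ := lt_of_lt_of_le one_pos hγ
  set P : ℝ := vp ^ γ with hP
  have hP0 : 0 < P := Real.rpow_pos_of_pos h0 γ
  have hPne : P ≠ 0 := ne_of_gt hP0
  have hPvp : P ≤ vp := by
    have := Real.rpow_le_rpow_of_exponent_ge h0 h1.le hγ
    simpa [Real.rpow_one] using this
  have hP1 : P < 1 := lt_of_le_of_lt hPvp h1
  have hs : 0 < 1 - P := by linarith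
  have haP : a * (1 - P) = P * (1 - vp) := by
    rw [ha]; field_simp
  have ha0 : 0 < a := by nlinarith
  have hvpneg : vp ^ (-γ) = 1 / P := by
    rw [Real.rpow_neg h0.le, one_div]
  have hvp1γ : vp ^ (1 - γ) = vp / P := by
    rw [show (1 - γ) = 1 + (-γ) by ring, Real.rpow_add h0, Real.rpow_one, hvpneg]
    ring
  have h7 : a * (1 / P) * (1 - P) = 1 - vp := by
    field_simp
    linear_combination haP
  have h8 : a * (vp / P - vp) = vp * (1 - vp) := by
    field_simp
    linear_combination haP
  have h4 : a * (vp ^ (-γ) - 1) = 1 - vp := by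
    rw [hvpneg]
    field_simp
    linear_combination haP
  -- ψ(v) = v^(1-γ) - v is strictly decreasing on Ici vp
  have hpsi : StrictAntiOn (fun v : ℝ => v ^ (1 - γ) - v) (Set.Ici vp) := by
    apply strictAntiOn_of_deriv_neg (convex_Ici vp)
    · intro x hx
      have hx0 : (0:ℝ) < x := lt_of_lt_of_le h0 hx
      exact ((Real.continuousAt_rpow_const x _ (Or.inl (ne_of_gt hx0))).sub
        continuousAt_id).continuousWithinAt
    · intro x hx
      rw [interior_Ici] at hx
      have hx0 : (0:ℝ) < x := lt_trans h0 hx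
      have hd : HasDerivAt (fun v : ℝ => v ^ (1 - γ) - v) ((1 - γ) * x ^ (1 - γ - 1) - 1) x :=
        (Real.hasDerivAt_rpow_const (Or.inl (ne_of_gt hx0))).sub (hasDerivAt_id x)
      rw [hd.deriv]
      have h4' : 0 < x ^ (1 - γ - 1) := Real.rpow_pos_of_pos hx0 _
      nlinarith
  -- F(v) = a*(v^(1-γ) - v) + (γ-1+vp)*v - vp*γ is monotone on Ici vp
  have hF : MonotoneOn (fun v : ℝ => a * (v ^ (1 - γ) - v) + (γ - 1 + vp) * v - vp * γ)
      (Set.Ici vp) := by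
    apply monotoneOn_of_deriv_nonneg (convex_Ici vp)
    · intro x hx
      have hx0 : (0:ℝ) < x := lt_of_lt_of_le h0 hx
      exact ((continuousAt_const.mul ((Real.continuousAt_rpow_const x _
        (Or.inl (ne_of_gt hx0))).sub continuousAt_id)).add
        (continuousAt_const.mul continuousAt_id) |>.sub continuousAt_const).continuousWithinAt
    · intro x hx
      rw [interior_Ici] at hx
      have hx0 : (0:ℝ) < x := lt_trans h0 hx
      exact ((((Real.hasDerivAt_rpow_const (Or.inl (ne_of_gt hx0))).sub
        (hasDerivAt_id x)).const_mul a).add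
        ((hasDerivAt_id x).const_mul (γ - 1 + vp)) |>.sub_const
        (vp * γ)).differentiableAt.differentiableWithinAt
    · intro x hx
      rw [interior_Ici] at hx
      have hx0 : (0:ℝ) < x := lt_trans h0 hx
      have hd : HasDerivAt (fun v : ℝ => a * (v ^ (1 - γ) - v) + (γ - 1 + vp) * v - vp * γ)
          (a * ((1 - γ) * x ^ (1 - γ - 1) - 1) + (γ - 1 + vp) * 1) x :=
        ((((Real.hasDerivAt_rpow_const (Or.inl (ne_of_gt hx0))).sub
          (hasDerivAt_id x)).const_mul a).add
          ((hasDerivAt_id x).const_mul (γ - 1 + vp)) |>.sub_const (vp * γ))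
      rw [hd.deriv]
      have hxg : x ^ (1 - γ - 1) = x ^ (-γ) := by norm_num
      rw [hxg]
      have hcmp : x ^ (-γ) ≤ vp ^ (-γ) :=
        Real.rpow_le_rpow_of_nonpos h0 hx.le (by linarith)
      have hxneg : (1 - γ) * vp ^ (-γ) ≤ (1 - γ) * x ^ (-γ) := by
        have h1γ : 1 - γ ≤ 0 := by linarith
        nlinarith
      have hvp' : 0 ≤ a * ((1 - γ) * vp ^ (-γ) - 1) + (γ - 1 + vp) := by
        rw [hvpneg]
        have hkey : (1 - P) * (a * ((1 - γ) * (1 / P) - 1) + (γ - 1 + vp)) = γ * (vp - P) := by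
          linear_combination (1 - γ) * h7 - haP
        nlinarith [mul_nonneg hγ0.le (sub_nonneg.mpr hPvp)]
      nlinarith
  have hconv := rpow_strictConvexOn (show -γ < 0 by linarith)
  intro v hvlo hvhi
  have hv0 : (0:ℝ) < v := lt_trans h0 hvlo
  have hvvp : 0 < v - vp := by linarith
  have hv1γ : v ^ (1 - γ) = v * v ^ (-γ) := by
    rw [show (1 - γ) = 1 + (-γ) by ring, Real.rpow_add hv0, Real.rpow_one]
  have hHv : H v = v * v - v + a * (v ^ (1 - γ) - v) := by
    rw [hH v, hv1γ]; ring
  -- Upper bound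
  have hupper : H v ≤ (v - vp) * (v - (1 - vp)) := by
    have hlt : v ^ (1 - γ) - v < vp ^ (1 - γ) - vp :=
      hpsi Set.self_mem_Ici (Set.mem_Ici.mpr hvlo.le) hvlo
    have hval : a * (vp ^ (1 - γ) - vp) = vp * (1 - vp) := by
      rw [hvp1γ]; exact h8
    have hle : a * (v ^ (1 - γ) - v) ≤ vp * (1 - vp) := by
      rw [← hval]
      exact mul_le_mul_of_nonneg_left hlt.le ha0.le
    rw [hHv]; nlinarith
  -- Lower bound
  have hlower : (v - vp) * (v - γ) ≤ H v := by
    have hFv := hF Set.self_mem_Ici (Set.mem_Ici.mpr hvlo.le) hvlo.le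
    simp only at hFv
    have hFvp : a * (vp ^ (1 - γ) - vp) + (γ - 1 + vp) * vp - vp * γ = 0 := by
      rw [hvp1γ]
      linear_combination h8
    rw [hHv]
    nlinarith [hFv, hFvp]
  -- Negativity
  have hneg : H v < 0 := by
    set t : ℝ := (1 - v) / (1 - vp) with hterm
    have h1vp : 0 < 1 - vp := by linarith
    have hne : (1:ℝ) - vp ≠ 0 := ne_of_gt h1vp
    have ht0 : 0 < t := div_pos (by linarith) h1vp
    have ht1 : t < 1 := (div_lt_one h1vp).mpr (by linarith)
    have htv : t * (1 - vp) = 1 - v := by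
      rw [hterm]; exact div_mul_cancel₀ _ hne
    have hcomb : t * vp + (1 - t) * 1 = v := by linear_combination -htv
    have hvne : vp ≠ (1:ℝ) := ne_of_lt h1
    have hstrict := hconv.2 (Set.mem_Ioi.mpr h0) (Set.mem_Ioi.mpr one_pos) hvne ht0
      (by linarith : (0:ℝ) < 1 - t) (by ring)
    simp only [smul_eq_mul, hcomb, Real.one_rpow] at hstrict
    have hgv : v - 1 + a * (v ^ (-γ) - 1) < 0 := by
      have h2 : a * (v ^ (-γ)) < a * (t * vp ^ (-γ) + (1 - t) * 1) :=
        mul_lt_mul_of_pos_left hstrict ha0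
      have h4t : t * (a * (vp ^ (-γ) - 1)) = t * (1 - vp) := by rw [h4]
      nlinarith [h2, h4t, htv]
    rw [hH v]
    exact mul_neg_of_pos_of_neg hv0 hgv
  refine ⟨⟨?_, ?_⟩, hneg⟩
  · rw [le_div_iff₀ hvvp]
    calc (v - γ) * (v - vp) = (v - vp) * (v - γ) := by ring
      _ ≤ H v := hlower
  · rw [div_le_iff₀ hvvp]
    calc H v ≤ (v - vp) * (v - (1 - vp)) := hupper
      _ = (v - (1 - vp)) * (v - vp) := by ring
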